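/- Let (Ω, ℱ, P) be a probability space, let n be a positive integer, let α₁, …, αₙ be nonnegative real numbers, and let A₁, …, Aₙ ∈ ℱ be events with P(Aᵢ) = pᵢ for each i. Then the random variable Z = Σᵢ₌₁ⁿ αᵢ·1_{Aᵢ} satisfies Var(Z) ≤ (Σᵢ₌₁ⁿ αᵢ·√pᵢ)². (This is the variance part of Theorem 1: the value stored in one row of the Representer Sketch at the query's cell has variance at most (Σᵢ αᵢ √K(xᵢ,q))².) -/

import Mathlib

open MeasureTheory ProbabilityTheory

/-- **Variance part of Theorem 1 (Sketch Estimator).**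
The value stored by one row of the Representer Sketch at the query's cell,
`Z = ∑ i, αᵢ · 1_{Aᵢ}` with nonnegative weights `αᵢ`, where `Aᵢ` is the collision
event with probability `pᵢ = K(xᵢ, q)`, satisfies
`Var(Z) ≤ (∑ i, αᵢ · √pᵢ)²`. -/
theorem sketch_estimator_variance
    {Ω : Type*} [MeasurableSpace Ω] (P : Measure Ω) [IsProbabilityMeasure P]
    (n : ℕ) (hn : 0 < n) (α p : Fin n → ℝ) (hα : ∀ i, 0 ≤ α i)
    (A : Fin n → Set Ω) (hA : ∀ i, MeasurableSet (A i))
    (hp : ∀ i, (P (A i)).toReal = p i)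
    (Z : Ω → ℝ)
    (hZ : ∀ ω, Z ω = ∑ i, α i * (A i).indicator (fun _ => (1 : ℝ)) ω) :
    variance Z P ≤ (∑ i, α i * Real.sqrt (p i)) ^ 2 := by
  have hZfun : Z = fun ω => ∑ i, α i * (A i).indicator (fun _ => (1:ℝ)) ω := funext hZ
  have hmem : ∀ i : Fin n, MemLp ((A i).indicator (fun _ => (1:ℝ))) 2 P := fun i =>
    memLp_indicator_const 2 (hA i) 1 (Or.inr (measure_ne_top P _))
  have hZmem : MemLp Z 2 P := by
    rw [hZfun]
    exact memLp_finset_sum _ (fun i _ => ((hmem i).const_mul (α i)))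
  -- pointwise expansion of Z²
  have hsq : ∀ ω, Z ω ^ 2
      = ∑ i, ∑ j, α i * α j * (A i ∩ A j).indicator (fun _ => (1:ℝ)) ω := by
    intro ω
    rw [hZ, sq, Finset.sum_mul_sum]
    refine Finset.sum_congr rfl fun i _ => Finset.sum_congr rfl fun j _ => ?_
    have h := Set.inter_indicator_mul (fun _ : Ω => (1:ℝ)) (fun _ : Ω => (1:ℝ))
      (s := A i) (t := A j) ω
    simp only [mul_one] at h
    rw [h]; ring
  -- integrability of each summand
  have hint : ∀ i j : Fin n,
      Integrable (fun ω => α i * α j * (A i ∩ A j).indicator (fun _ => (1:ℝ)) ω) P := by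
    intro i j
    exact ((integrable_const (1:ℝ)).indicator ((hA i).inter (hA j))).const_mul _
  have key : ∫ ω, Z ω ^ 2 ∂P = ∑ i, ∑ j, α i * α j * (P (A i ∩ A j)).toReal := by
    rw [show (fun ω => Z ω ^ 2)
        = fun ω => ∑ i, ∑ j, α i * α j * (A i ∩ A j).indicator (fun _ => (1:ℝ)) ω
      from funext hsq]
    rw [integral_finset_sum _ (fun i _ => integrable_finset_sum _ (fun j _ => hint i j))]
    refine Finset.sum_congr rfl fun i _ => ?_
    rw [integral_finset_sum _ (fun j _ => hint i j)]
    refine Finset.sum_congr rfl fun j _ => ?_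
    rw [integral_const_mul, integral_indicator_const (1:ℝ) ((hA i).inter (hA j)),
      smul_eq_mul, mul_one, measureReal_def]
  -- the cross terms are bounded by √pᵢ √pⱼ
  have hcross : ∀ i j : Fin n,
      (P (A i ∩ A j)).toReal ≤ Real.sqrt (p i) * Real.sqrt (p j) := by
    intro i j
    set x := (P (A i ∩ A j)).toReal with hx
    have hx0 : 0 ≤ x := ENNReal.toReal_nonneg
    have hxi : x ≤ p i := by
      rw [← hp i]
      exact ENNReal.toReal_mono (measure_ne_top P _) (measure_mono Set.inter_subset_left)
    have hxj : x ≤ p j := by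
      rw [← hp j]
      exact ENNReal.toReal_mono (measure_ne_top P _) (measure_mono Set.inter_subset_right)
    calc x = Real.sqrt (x * x) := by rw [Real.sqrt_mul_self hx0]
      _ ≤ Real.sqrt (p i * p j) :=
          Real.sqrt_le_sqrt (mul_le_mul hxi hxj hx0 (hx0.trans hxi))
      _ = Real.sqrt (p i) * Real.sqrt (p j) := Real.sqrt_mul (hx0.trans hxi) _
  have hEsq : ∫ ω, Z ω ^ 2 ∂P ≤ (∑ i, α i * Real.sqrt (p i)) ^ 2 := by
    rw [key, sq, Finset.sum_mul_sum]
    refine Finset.sum_le_sum fun i _ => Finset.sum_le_sum fun j _ => ?_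
    calc α i * α j * (P (A i ∩ A j)).toReal
        ≤ α i * α j * (Real.sqrt (p i) * Real.sqrt (p j)) := by
          exact mul_le_mul_of_nonneg_left (hcross i j) (mul_nonneg (hα i) (hα j))
      _ = α i * Real.sqrt (p i) * (α j * Real.sqrt (p j)) := by ring
  have hvar := variance_eq_sub hZmem
  have : variance Z P ≤ ∫ ω, Z ω ^ 2 ∂P := by
    rw [hvar]
    have : (0:ℝ) ≤ (∫ ω, Z ω ∂P) ^ 2 := sq_nonneg _
    simp only [Pi.pow_apply]
    linarith [sq_nonneg (∫ ω, Z ω ∂P)]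
  exact this.trans hEsq
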